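/- With the notation and assumptions of the kernel comparison lemma, for each fixed y ∈ Ω one has limsup_{t→∞} ∫_Ω |k^θ(x,y,t) - k_{ℝ^N}(x,y,t)| dx ≤ 2(1 - Φ⁰(y)). Moreover, if Φ⁰(y) → 1 as |y| → ∞, then limsup_{|y|→∞} limsup_{t→∞} ∫_Ω |k^θ(x,y,t) - k_{ℝ^N}(x,y,t)| dx = 0. -/

import Mathlib

open MeasureTheory Real Filter Set

/-- The Gaussian heat kernel on `ℝ^N`: `k_{ℝ^N}(x,y,t) = (4πt)^{-N/2} e^{-|x-y|²/(4t)}`. -/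
noncomputable def kRN (N : ℕ) (x y : EuclideanSpace ℝ (Fin N)) (t : ℝ) : ℝ :=
  (4 * π * t) ^ (-(N : ℝ) / 2) * Real.exp (-‖x - y‖ ^ 2 / (4 * t))

lemma kRN_eq (N : ℕ) (x y : EuclideanSpace ℝ (Fin N)) (t : ℝ) (ht : 0 < t) :
    kRN N x y t = (4 * π * t) ^ (-(N : ℝ) / 2) *
      Real.exp (-(1 / (4 * t)) * ‖x - y‖ ^ 2) := by
  unfold kRN
  congr 1
  ring_nf

lemma integrable_kRN (N : ℕ) (y : EuclideanSpace ℝ (Fin N)) (t : ℝ) (ht : 0 < t) :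
    Integrable (fun x => kRN N x y t) := by
  have hb : (0 : ℝ) < 1 / (4 * t) := by positivity
  have h1 : Integrable (fun v : EuclideanSpace ℝ (Fin N) =>
      Real.exp (-(1 / (4 * t)) * ‖v‖ ^ 2)) := by
    have := GaussianFourier.integrable_cexp_neg_mul_sq_norm_add
      (V := EuclideanSpace ℝ (Fin N)) (b := ((1 / (4 * t) : ℝ) : ℂ))
      (by simpa using hb) 0 0
    have h2 := this.norm
    refine h2.congr ?_
    filter_upwards with v
    rw [show -((1 / (4 * t) : ℝ) : ℂ) * (‖v‖ : ℂ) ^ 2 + 0 * ((inner ℝ (0 : EuclideanSpace ℝ (Fin N)) v : ℝ) : ℂ) = ((-(1 / (4 * t)) * ‖v‖ ^ 2 : ℝ) : ℂ) by push_cast; ring]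
    rw [Complex.norm_exp_ofReal]
  have h3 : Integrable (fun x : EuclideanSpace ℝ (Fin N) =>
      Real.exp (-(1 / (4 * t)) * ‖x - y‖ ^ 2)) := h1.comp_sub_right y
  have h4 := h3.const_mul ((4 * π * t) ^ (-(N : ℝ) / 2))
  refine h4.congr ?_
  filter_upwards with x
  rw [kRN_eq N x y t ht]

lemma integral_kRN (N : ℕ) (y : EuclideanSpace ℝ (Fin N)) (t : ℝ) (ht : 0 < t) :
    ∫ x, kRN N x y t = 1 := by
  have hb : (0 : ℝ) < 1 / (4 * t) := by positivity
  have hc : (0 : ℝ) < 4 * π * t := by positivity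
  calc ∫ x, kRN N x y t
      = ∫ x, (4 * π * t) ^ (-(N : ℝ) / 2) *
          Real.exp (-(1 / (4 * t)) * ‖x - y‖ ^ 2) := by
        refine integral_congr_ae ?_
        filter_upwards with x
        exact kRN_eq N x y t ht
    _ = (4 * π * t) ^ (-(N : ℝ) / 2) *
          ∫ x : EuclideanSpace ℝ (Fin N), Real.exp (-(1 / (4 * t)) * ‖x - y‖ ^ 2) := by
        rw [integral_const_mul]
    _ = (4 * π * t) ^ (-(N : ℝ) / 2) *
          ∫ x : EuclideanSpace ℝ (Fin N), Real.exp (-(1 / (4 * t)) * ‖x‖ ^ 2) := by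
        rw [integral_sub_right_eq_self (fun x : EuclideanSpace ℝ (Fin N) =>
          Real.exp (-(1 / (4 * t)) * ‖x‖ ^ 2)) y]
    _ = (4 * π * t) ^ (-(N : ℝ) / 2) *
          (π / (1 / (4 * t))) ^ ((Module.finrank ℝ (EuclideanSpace ℝ (Fin N))) / 2 : ℝ) := by
        rw [GaussianFourier.integral_rexp_neg_mul_sq_norm hb]
    _ = 1 := by
        rw [finrank_euclideanSpace, Fintype.card_fin]
        have : π / (1 / (4 * t)) = 4 * π * t := by field_simp
        rw [this, neg_div, ← Real.rpow_add hc]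
        norm_num

lemma key_bound (N : ℕ) (K : Set (EuclideanSpace ℝ (Fin N))) (hK : IsCompact K)
    (Ω : Set (EuclideanSpace ℝ (Fin N))) (hΩ : Ω = Kᶜ)
    (k0 kθ : EuclideanSpace ℝ (Fin N) → EuclideanSpace ℝ (Fin N) → ℝ → ℝ)
    (hcomp : ∀ x ∈ Ω, ∀ y ∈ Ω, ∀ t : ℝ, 0 < t → k0 x y t ≤ kθ x y t)
    (hk0RN : ∀ x ∈ Ω, ∀ y ∈ Ω, ∀ t : ℝ, 0 < t → k0 x y t ≤ kRN N x y t)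
    (hθ1 : ∀ y ∈ Ω, ∀ t : ℝ, 0 < t → (∫ x in Ω, kθ x y t) ≤ 1)
    (Φ : EuclideanSpace ℝ (Fin N) → ℝ)
    (hΦle : ∀ y ∈ Ω, ∀ t : ℝ, 0 < t → Φ y ≤ ∫ x in Ω, k0 x y t)
    (hint0 : ∀ y ∈ Ω, ∀ t : ℝ, 0 < t → IntegrableOn (fun x => k0 x y t) Ω)
    (hintθ : ∀ y ∈ Ω, ∀ t : ℝ, 0 < t → IntegrableOn (fun x => kθ x y t) Ω)
    (y : EuclideanSpace ℝ (Fin N)) (hy : y ∈ Ω) (t : ℝ) (ht : 0 < t) :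
    (∫ x in Ω, |kθ x y t - kRN N x y t|) ≤ 2 * (1 - Φ y) := by
  have hΩm : MeasurableSet Ω := by
    rw [hΩ]; exact hK.isClosed.measurableSet.compl
  have hR : IntegrableOn (fun x => kRN N x y t) Ω :=
    (integrable_kRN N y t ht).integrableOn
  have h0 := hint0 y hy t ht
  have hθ := hintθ y hy t ht
  -- pointwise bound
  have hptwise : ∀ x ∈ Ω, |kθ x y t - kRN N x y t| ≤
      (kθ x y t - k0 x y t) + (kRN N x y t - k0 x y t) := by
    intro x hx
    have h1 := hcomp x hx y hy t ht
    have h2 := hk0RN x hx y hy t ht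
    rw [abs_sub_le_iff]
    constructor <;> linarith
  have hstep : (∫ x in Ω, |kθ x y t - kRN N x y t|) ≤
      ∫ x in Ω, ((kθ x y t - k0 x y t) + (kRN N x y t - k0 x y t)) := by
    refine setIntegral_mono_on ((hθ.sub hR).abs) ((hθ.sub h0).add (hR.sub h0)) hΩm ?_
    exact hptwise
  have hsum : (∫ x in Ω, ((kθ x y t - k0 x y t) + (kRN N x y t - k0 x y t)))
      = ((∫ x in Ω, kθ x y t) - ∫ x in Ω, k0 x y t)
        + ((∫ x in Ω, kRN N x y t) - ∫ x in Ω, k0 x y t) := by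
    have hA : IntegrableOn (fun x => kθ x y t - k0 x y t) Ω := hθ.sub h0
    have hB : IntegrableOn (fun x => kRN N x y t - k0 x y t) Ω := hR.sub h0
    rw [integral_add hA hB, integral_sub hθ h0, integral_sub hR h0]
  have hRint : (∫ x in Ω, kRN N x y t) ≤ 1 := by
    have h1 : (∫ x in Ω, kRN N x y t) ≤ ∫ x, kRN N x y t := by
      refine setIntegral_le_integral (integrable_kRN N y t ht) ?_
      filter_upwards with x
      unfold kRN
      positivity
    rw [integral_kRN N y t ht] at h1
    exact h1
  have hθint := hθ1 y hy t ht
  have hΦ := hΦle y hy t ht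
  calc (∫ x in Ω, |kθ x y t - kRN N x y t|) ≤ _ := hstep
    _ = _ := hsum
    _ ≤ 2 * (1 - Φ y) := by linarith

theorem stmt9 (N : ℕ) (K : Set (EuclideanSpace ℝ (Fin N))) (hK : IsCompact K)
    (Ω : Set (EuclideanSpace ℝ (Fin N))) (hΩ : Ω = Kᶜ)
    (k0 kθ : EuclideanSpace ℝ (Fin N) → EuclideanSpace ℝ (Fin N) → ℝ → ℝ)
    (hpos : ∀ x ∈ Ω, ∀ y ∈ Ω, ∀ t : ℝ, 0 < t → 0 < k0 x y t)
    (hcomp : ∀ x ∈ Ω, ∀ y ∈ Ω, ∀ t : ℝ, 0 < t → k0 x y t ≤ kθ x y t)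
    (hk0RN : ∀ x ∈ Ω, ∀ y ∈ Ω, ∀ t : ℝ, 0 < t → k0 x y t ≤ kRN N x y t)
    (hθ1 : ∀ y ∈ Ω, ∀ t : ℝ, 0 < t → (∫ x in Ω, kθ x y t) ≤ 1)
    (Φ : EuclideanSpace ℝ (Fin N) → ℝ)
    (hΦrange : ∀ y ∈ Ω, Φ y ∈ Icc (0 : ℝ) 1)
    (hΦle : ∀ y ∈ Ω, ∀ t : ℝ, 0 < t → Φ y ≤ ∫ x in Ω, k0 x y t)
    (hint0 : ∀ y ∈ Ω, ∀ t : ℝ, 0 < t → IntegrableOn (fun x => k0 x y t) Ω)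
    (hintθ : ∀ y ∈ Ω, ∀ t : ℝ, 0 < t → IntegrableOn (fun x => kθ x y t) Ω)
    -- Φ⁰(y) → 1 as |y| → ∞
    (hΦ1 : Tendsto Φ (Filter.comap (fun y : EuclideanSpace ℝ (Fin N) => ‖y‖) atTop)
      (nhds 1)) :
    (∀ y ∈ Ω,
      Filter.limsup (fun t => ∫ x in Ω, |kθ x y t - kRN N x y t|) atTop ≤
        2 * (1 - Φ y)) ∧
    Filter.limsup
        (fun y => Filter.limsup (fun t => ∫ x in Ω, |kθ x y t - kRN N x y t|) atTop)
        (Filter.comap (fun y : EuclideanSpace ℝ (Fin N) => ‖y‖) atTop) = 0 := by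
  have key : ∀ y ∈ Ω, ∀ t : ℝ, 0 < t →
      (∫ x in Ω, |kθ x y t - kRN N x y t|) ≤ 2 * (1 - Φ y) :=
    fun y hy t ht => key_bound N K hK Ω hΩ k0 kθ hcomp hk0RN hθ1 Φ hΦle hint0 hintθ y hy t ht
  have hnonneg : ∀ y, ∀ t : ℝ, 0 ≤ ∫ x in Ω, |kθ x y t - kRN N x y t| :=
    fun y t => integral_nonneg (fun x => abs_nonneg _)
  have part1 : ∀ y ∈ Ω,
      Filter.limsup (fun t => ∫ x in Ω, |kθ x y t - kRN N x y t|) atTop ≤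
        2 * (1 - Φ y) := by
    intro y hy
    have hev : ∀ᶠ t in atTop, (∫ x in Ω, |kθ x y t - kRN N x y t|) ≤ 2 * (1 - Φ y) := by
      filter_upwards [eventually_gt_atTop (0 : ℝ)] with t ht
      exact key y hy t ht
    exact Filter.limsup_le_of_le (isCoboundedUnder_le_of_le atTop (fun t => hnonneg y t)) hev
  refine ⟨part1, ?_⟩
  have hgge : ∀ y ∈ Ω,
      0 ≤ Filter.limsup (fun t => ∫ x in Ω, |kθ x y t - kRN N x y t|) atTop := by
    intro y hy
    refine Filter.le_limsup_of_frequently_le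
      (Frequently.of_forall (fun t => hnonneg y t)) ?_
    refine ⟨2 * (1 - Φ y), ?_⟩
    rw [Filter.eventually_map]
    filter_upwards [eventually_gt_atTop (0 : ℝ)] with t ht
    exact key y hy t ht
  set L := Filter.comap (fun y : EuclideanSpace ℝ (Fin N) => ‖y‖) atTop with hL
  set g := fun y => Filter.limsup (fun t => ∫ x in Ω, |kθ x y t - kRN N x y t|) atTop
    with hg
  -- eventually y ∈ Ω
  have hevΩ : ∀ᶠ y in L, y ∈ Ω := by
    obtain ⟨R, hR⟩ := hK.isBounded.exists_norm_le
    rw [hL, Filter.eventually_comap]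
    filter_upwards [eventually_gt_atTop R] with r hr y hyr
    rw [hΩ]
    intro hyK
    have := hR y hyK
    rw [hyr] at this
    linarith
  have hgle : ∀ y ∈ Ω, g y ≤ 2 * (1 - Φ y) := part1
  have hupper : Tendsto (fun y => 2 * (1 - Φ y)) L (nhds 0) := by
    have := ((tendsto_const_nhds (x := (1:ℝ)) (f := L)).sub hΦ1).const_mul (2 : ℝ)
    simpa using this
  by_cases hbot : L = ⊥
  · rw [hbot]
    have : {a : ℝ | ∀ᶠ y in (⊥ : Filter (EuclideanSpace ℝ (Fin N))), g y ≤ a} = univ := by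
      ext a; simp
    rw [Filter.limsup, Filter.limsSup]
    show sInf {a : ℝ | ∀ᶠ y in (⊥ : Filter _), g y ≤ a} = 0
    rw [this]
    exact Real.sInf_of_not_bddBelow (not_bddBelow_univ)
  · have : L.NeBot := ⟨hbot⟩
    have htend : Tendsto g L (nhds 0) := by
      refine tendsto_of_tendsto_of_tendsto_of_le_of_le' tendsto_const_nhds hupper ?_ ?_
      · filter_upwards [hevΩ] with y hy using hgge y hy
      · filter_upwards [hevΩ] with y hy using hgle y hy
    exact htend.limsup_eq
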